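/- For all x, y ∈ [-1,1], ((2/π)arcsin(x) − (2/π)arcsin(y))² ≤ (4/π²)(x−y)² + (6/5)(x⁴ + y⁴). -/

import Mathlib

open Real

-- sin x ≥ x - x^3/6 for x ≥ 0
lemma sin_ge_sub_cube6 {x : ℝ} (hx : 0 ≤ x) : x - x ^ 3 / 6 ≤ sin x := by
  have key : MonotoneOn (fun t : ℝ => sin t - (t - t ^ 3 / 6)) (Set.Ici 0) := by
    apply monotoneOn_of_deriv_nonneg (convex_Ici 0)
    · fun_prop
    · fun_prop
    · intro t ht
      have h1 : HasDerivAt (fun t : ℝ => sin t - (t - t ^ 3 / 6))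
          (cos t - (1 - 3 * t ^ 2 / 6)) t := by
        have := (Real.hasDerivAt_sin t).sub
          ((hasDerivAt_id t).sub (((hasDerivAt_pow 3 t)).div_const 6))
        exact this.congr_deriv (by norm_num)
      rw [h1.deriv]
      have := Real.one_sub_sq_div_two_le_cos (x := t)
      nlinarith [this]
  have h0 : (fun t : ℝ => sin t - (t - t ^ 3 / 6)) 0 ≤
      (fun t : ℝ => sin t - (t - t ^ 3 / 6)) x :=
    key (by simp) (by simpa using hx) hx
  simp at h0
  linarith

lemma key_theta {θ : ℝ} (h0 : 0 ≤ θ) (h1 : θ ≤ π / 2) :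
    θ ≤ sin θ + (π / 2 - 1) * sin θ ^ 3 := by
  have hπ : (3.141592 : ℝ) < π := pi_gt_d6
  have hπ' : π < 3.141593 := pi_lt_d6
  rcases le_or_gt θ 1.3 with hc | hc
  · have hs0 : 0 ≤ sin θ := sin_nonneg_of_nonneg_of_le_pi h0 (by linarith)
    have hs : θ - θ ^ 3 / 6 ≤ sin θ := sin_ge_sub_cube6 h0
    have hq : θ ^ 2 ≤ 1.69 := by nlinarith
    have hp : 0 ≤ θ - θ ^ 3 / 6 := by nlinarith [mul_le_mul_of_nonneg_left hq h0]
    have hcube : (θ - θ ^ 3 / 6) ^ 3 ≤ sin θ ^ 3 := pow_le_pow_left₀ hp hs 3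
    have hl : 0.71833 * θ ≤ θ - θ ^ 3 / 6 := by
      nlinarith [mul_le_mul_of_nonneg_left hq h0]
    have hl0 : 0 ≤ 0.71833 * θ := by positivity
    have hcube2 : (0.71833 * θ) ^ 3 ≤ (θ - θ ^ 3 / 6) ^ 3 := pow_le_pow_left₀ hl0 hl 3
    have t1 : (0.71833 * θ) ^ 3 ≤ sin θ ^ 3 := le_trans hcube2 hcube
    have hcpos : (0.5707 : ℝ) ≤ π / 2 - 1 := by nlinarith
    have t2 : 0.5707 * (0.71833 * θ) ^ 3 ≤ (π / 2 - 1) * sin θ ^ 3 :=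
      mul_le_mul hcpos t1 (pow_nonneg hl0 3) (by linarith)
    nlinarith [t2, hs]
  · -- antitone on [1.3, π/2]
    set c : ℝ := π / 2 - 1 with hcdef
    have hcb : 0.5707 < c ∧ c < 0.570797 := by
      rw [hcdef]; constructor <;> nlinarith
    clear_value c
    have hanti : AntitoneOn (fun t : ℝ => sin t + c * sin t ^ 3 - t)
        (Set.Icc 1.3 (π / 2)) := by
      apply antitoneOn_of_deriv_nonpos (convex_Icc _ _)
      · fun_prop
      · fun_prop
      · intro t ht
        rw [interior_Icc] at ht
        have hd : HasDerivAt (fun t : ℝ => sin t + c * sin t ^ 3 - t)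
            (cos t + c * (3 * sin t ^ 2 * cos t) - 1) t := by
          have := ((Real.hasDerivAt_sin t).add
            (((Real.hasDerivAt_sin t).pow 3).const_mul c)).sub (hasDerivAt_id t)
          exact this.congr_deriv (by norm_num)
        rw [hd.deriv]
        have hct : cos t ≤ cos 1.3 :=
          Real.cos_le_cos_of_nonneg_of_le_pi (by norm_num) (by linarith [ht.2]) ht.1.le
        have hct0 : 0 ≤ cos t := Real.cos_nonneg_of_mem_Icc ⟨by linarith [ht.1], ht.2.le⟩
        have hs65 : (0.5813 : ℝ) ≤ sin 0.65 := by
          have := Real.sin_gt_sub_cube (x := 0.65) (by norm_num)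
          nlinarith
        have hcos13 : cos 1.3 ≤ 0.3242 := by
          have h2 : cos (2 * 0.65) = 2 * cos 0.65 ^ 2 - 1 := Real.cos_two_mul 0.65
          have h3 : sin (0.65:ℝ) ^ 2 + cos (0.65:ℝ) ^ 2 = 1 := Real.sin_sq_add_cos_sq 0.65
          have : (1.3 : ℝ) = 2 * 0.65 := by norm_num
          rw [this, h2]
          nlinarith
        have hst : sin t ^ 2 ≤ 1 := by
          nlinarith [Real.sin_sq_add_cos_sq t, sq_nonneg (cos t)]
        have hX : sin t ^ 2 * cos t ≤ cos t := mul_le_of_le_one_left hct0 hst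
        have hX0 : 0 ≤ sin t ^ 2 * cos t := mul_nonneg (sq_nonneg _) hct0
        have hXc : sin t ^ 2 * cos t ≤ 0.3242 := hX.trans (hct.trans hcos13)
        have hcx : c * (sin t ^ 2 * cos t) ≤ 0.570797 * 0.3242 :=
          mul_le_mul hcb.2.le hXc hX0 (by norm_num)
        have hre : c * (3 * sin t ^ 2 * cos t) = 3 * (c * (sin t ^ 2 * cos t)) := by
          ring
        rw [hre]
        linarith
    have := hanti (Set.mem_Icc.mpr ⟨hc.le, h1⟩)
      (Set.mem_Icc.mpr ⟨by linarith, le_refl _⟩) h1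
    have hend : sin (π/2) + c * sin (π/2) ^ 3 - (π/2) = 0 := by
      rw [Real.sin_pi_div_two, hcdef]; ring
    simp only [hend] at this
    linarith

lemma arcsin_cubic_bound {t : ℝ} (h0 : 0 ≤ t) (h1 : t ≤ 1) :
    arcsin t ≤ t + (π / 2 - 1) * t ^ 3 := by
  have hA0 : 0 ≤ arcsin t := Real.arcsin_nonneg.mpr h0
  have hA1 : arcsin t ≤ π / 2 := Real.arcsin_le_pi_div_two t
  have := key_theta hA0 hA1
  rwa [Real.sin_arcsin (by linarith) h1] at this

lemma le_arcsin_self {t : ℝ} (h0 : 0 ≤ t) (h1 : t ≤ 1) : t ≤ arcsin t := by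
  have hA0 : 0 ≤ arcsin t := Real.arcsin_nonneg.mpr h0
  have := Real.sin_le hA0
  rwa [Real.sin_arcsin (by linarith) h1] at this

lemma abs_arcsin_sub {t : ℝ} (h1 : -1 ≤ t) (h2 : t ≤ 1) :
    |arcsin t - t| ≤ (π / 2 - 1) * |t| ^ 3 := by
  have hc : (0:ℝ) ≤ π / 2 - 1 := by nlinarith [pi_gt_three]
  have main : ∀ s : ℝ, 0 ≤ s → s ≤ 1 → |arcsin s - s| ≤ (π / 2 - 1) * |s| ^ 3 := by
    intro s hs0 hs1
    have h3 : arcsin s ≤ s + (π / 2 - 1) * s ^ 3 := arcsin_cubic_bound hs0 hs1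
    have h4 : s ≤ arcsin s := le_arcsin_self hs0 hs1
    rw [abs_of_nonneg hs0, abs_of_nonneg (by linarith : (0:ℝ) ≤ arcsin s - s)]
    linarith
  rcases le_total 0 t with ht | ht
  · exact main t ht h2
  · have := main (-t) (by linarith) (by linarith)
    rw [Real.arcsin_neg] at this
    calc |arcsin t - t| = |-(arcsin t) - -t| := by rw [← abs_neg]; ring_nf
      _ ≤ (π / 2 - 1) * |(-t)| ^ 3 := this
      _ = (π / 2 - 1) * |t| ^ 3 := by rw [abs_neg]

set_option maxHeartbeats 1000000 in
theorem stmt_2 (x y : ℝ) (hx : x ∈ Set.Icc (-1 : ℝ) 1) (hy : y ∈ Set.Icc (-1 : ℝ) 1) :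
    ((2 / π) * arcsin x - (2 / π) * arcsin y) ^ 2 ≤
      (4 / π ^ 2) * (x - y) ^ 2 + (6 / 5) * (x ^ 4 + y ^ 4) := by
  obtain ⟨hx1, hx2⟩ := hx
  obtain ⟨hy1, hy2⟩ := hy
  have hπ0 : 0 < π := pi_pos
  have hc : (0:ℝ) ≤ π / 2 - 1 := by nlinarith [pi_gt_three]
  set c : ℝ := π / 2 - 1 with hcdef
  set a : ℝ := arcsin x - x with hadef
  set b : ℝ := arcsin y - y with hbdef
  set u : ℝ := |x| with hudef
  set v : ℝ := |y| with hvdef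
  have hu0 : 0 ≤ u := abs_nonneg x
  have hv0 : 0 ≤ v := abs_nonneg y
  have hu1 : u ≤ 1 := abs_le.mpr ⟨hx1, hx2⟩
  have hv1 : v ≤ 1 := abs_le.mpr ⟨hy1, hy2⟩
  have ha : |a| ≤ c * u ^ 3 := abs_arcsin_sub hx1 hx2
  have hb : |b| ≤ c * v ^ 3 := abs_arcsin_sub hy1 hy2
  have hx4 : x ^ 4 = u ^ 4 := by
    rw [hudef, ← abs_pow]; exact (abs_of_nonneg (by positivity)).symm
  have hy4 : y ^ 4 = v ^ 4 := by
    rw [hvdef, ← abs_pow]; exact (abs_of_nonneg (by positivity)).symm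
  have hAB : arcsin x - arcsin y = (x - y) + (a - b) := by rw [hadef, hbdef]; ring
  have hxy : |x - y| ≤ u + v := abs_sub x y
  have hconst : 4 * c + 2 * c ^ 2 = π ^ 2 / 2 - 2 := by rw [hcdef]; ring
  clear_value c a b u v
  have habs : |a - b| ≤ c * (u ^ 3 + v ^ 3) := by
    calc |a - b| ≤ |a| + |b| := abs_sub a b
      _ ≤ c * u ^ 3 + c * v ^ 3 := add_le_add ha hb
      _ = c * (u ^ 3 + v ^ 3) := by ring
  have hcross : (x - y) * (a - b) ≤ (u + v) * (c * (u ^ 3 + v ^ 3)) := by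
    calc (x - y) * (a - b) ≤ |(x - y) * (a - b)| := le_abs_self _
      _ = |x - y| * |a - b| := abs_mul _ _
      _ ≤ (u + v) * (c * (u ^ 3 + v ^ 3)) :=
        mul_le_mul hxy habs (abs_nonneg _) (by linarith)
  have hsq : (a - b) ^ 2 ≤ (c * (u ^ 3 + v ^ 3)) ^ 2 := by
    rw [← sq_abs (a - b)]
    exact pow_le_pow_left₀ (abs_nonneg _) habs 2
  -- polynomial facts
  have hS : (0:ℝ) ≤ u ^ 4 + v ^ 4 := by positivity
  have p1 : (u + v) * (u ^ 3 + v ^ 3) ≤ 2 * (u ^ 4 + v ^ 4) := by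
    nlinarith [mul_nonneg (sq_nonneg (u - v)) (by positivity : (0:ℝ) ≤ u ^ 2 + u * v + v ^ 2)]
  have hu6 : u ^ 6 ≤ u ^ 4 := pow_le_pow_of_le_one hu0 hu1 (by norm_num)
  have hv6 : v ^ 6 ≤ v ^ 4 := pow_le_pow_of_le_one hv0 hv1 (by norm_num)
  have p2 : (u ^ 3 + v ^ 3) ^ 2 ≤ 2 * (u ^ 4 + v ^ 4) := by
    nlinarith [sq_nonneg (u ^ 3 - v ^ 3), hu6, hv6]
  have e1 : (u + v) * (c * (u ^ 3 + v ^ 3)) ≤ 2 * c * (u ^ 4 + v ^ 4) := by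
    have := mul_le_mul_of_nonneg_left p1 hc
    nlinarith [this]
  have e2 : (c * (u ^ 3 + v ^ 3)) ^ 2 ≤ 2 * c ^ 2 * (u ^ 4 + v ^ 4) := by
    have := mul_le_mul_of_nonneg_left p2 (sq_nonneg c)
    nlinarith [this]
  have hπ2 : π ^ 2 ≤ 10 := by nlinarith [pi_lt_d2]
  have key : (arcsin x - arcsin y) ^ 2 ≤
      (x - y) ^ 2 + (3 * π ^ 2 / 10) * (x ^ 4 + y ^ 4) := by
    rw [hAB, hx4, hy4]
    have hfin : 2 * ((x - y) * (a - b)) + (a - b) ^ 2 ≤ (3 * π ^ 2 / 10) * (u ^ 4 + v ^ 4) := by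
      nlinarith [hcross, hsq, e1, e2, hS, hπ2, hconst]
    nlinarith [hfin]
  have hrw : ((2 / π) * arcsin x - (2 / π) * arcsin y) ^ 2 =
      (4 / π ^ 2) * (arcsin x - arcsin y) ^ 2 := by
    field_simp
    ring
  rw [hrw]
  have h4π : (0:ℝ) < 4 / π ^ 2 := by positivity
  calc (4 / π ^ 2) * (arcsin x - arcsin y) ^ 2
      ≤ (4 / π ^ 2) * ((x - y) ^ 2 + (3 * π ^ 2 / 10) * (x ^ 4 + y ^ 4)) :=
        mul_le_mul_of_nonneg_left key h4π.le
    _ = (4 / π ^ 2) * (x - y) ^ 2 + (6 / 5) * (x ^ 4 + y ^ 4) := by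
        field_simp
        ring
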